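/- Let G = (N, Σ, R) be a first-order grammar with maximal nonterminal arity m and height-increase constant hinc. For every nonterminal A ∈ N and every i ∈ {1,…,ar(A)}: if there exists a word w ∈ Σ* with A(x1,…,x_{ar(A)}) →_w x_i in L_G, then there exists such a word of length at most (2 + hinc)^{|N|·m}; hence the maximal length d0 of shortest sink words satisfies d0 ≤ 1 + (2 + hinc)^{|N|·m}. -/

import Mathlib

open scoped ENat

noncomputable section

namespace FOG

/-- A node label: a nonterminal or a variable (variable `x_{i+1}` has index `i`). -/
abbrev Sym (Nt : Type) := Nt ⊕ ℕ

/-- A (pre)term over the nonterminals `Nt` and the variables, given by its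
(partial) labelling of tree positions; possibly infinite terms are allowed. -/
abbrev PreTerm (Nt : Type) := List ℕ → Option (Sym Nt)

variable {Nt : Type}

/-- the term consisting of the single variable `x_{i+1}` -/
def varPre (i : ℕ) : PreTerm Nt := fun p => if p = [] then some (Sum.inr i) else none

/-- the subterm of `E` rooted at position `p` -/
def subAt (E : PreTerm Nt) (p : List ℕ) : PreTerm Nt := fun q => E (p ++ q)

/-- the positions (nodes) of a term -/
def positions (E : PreTerm Nt) : Set (List ℕ) := {p | E p ≠ none}

/-- the set of subterms of a term -/
def subterms (E : PreTerm Nt) : Set (PreTerm Nt) := {F | ∃ p, E p ≠ none ∧ F = subAt E p}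

/-- the size `|E|` of a term: its number of distinct subterms -/
def size1 (E : PreTerm Nt) : ℕ := (subterms E).ncard

/-- `|E,F|`: the number of distinct subterms of `E` and `F` together -/
def size2 (E F : PreTerm Nt) : ℕ := (subterms E ∪ subterms F).ncard

/-- the set of (indices of) variables occurring in a term -/
def varsOf (E : PreTerm Nt) : Set ℕ := {i | ∃ p, E p = some (Sum.inr i)}

/-- `vars(E,F)` -/
def vars2 (E F : PreTerm Nt) : Set ℕ := varsOf E ∪ varsOf F

/-- the number of distinct subterms of `E` whose root label is a nonterminal -/
def ntcount (E : PreTerm Nt) : ℕ :=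
  {F | F ∈ subterms E ∧ ∃ A : Nt, F [] = some (Sum.inl A)}.ncard

/-- the height of a (finite) term -/
def heightP (E : PreTerm Nt) : ℕ := sSup {n | ∃ p ∈ positions E, p.length = n}

/-- Well-formedness: the root is labelled, and a child position `p ++ [i]` is
labelled iff `p` carries a nonterminal of arity `> i`; variables are leaves. -/
def IsTerm (ar : Nt → ℕ) (E : PreTerm Nt) : Prop :=
  E [] ≠ none ∧ ∀ p i, (E (p ++ [i]) ≠ none ↔ ∃ A, E p = some (Sum.inl A) ∧ i < ar A)

/-- a regular term: a term with finitely many distinct subterms -/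
def IsRegTerm (ar : Nt → ℕ) (E : PreTerm Nt) : Prop := IsTerm ar E ∧ (subterms E).Finite

/-- a finite term -/
def IsFinTerm (ar : Nt → ℕ) (E : PreTerm Nt) : Prop := IsTerm ar E ∧ (positions E).Finite

/-- does an (optional) label carry a variable? -/
def isVarLabel : Option (Sym Nt) → Bool
  | some (Sum.inr _) => true
  | _ => false

/-- The term `Eσ` obtained by applying the substitution `σ` to `E`:  at a position
`p = p₁ ++ p₂` where `p₁` is the (unique, if any) prefix of `p` at which `E` carries
a variable `x`, the label is that of `σ(x)` at `p₂`; elsewhere it is that of `E`. -/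
def substPre (E : PreTerm Nt) (σ : ℕ → PreTerm Nt) : PreTerm Nt := fun p =>
  match (List.range (p.length + 1)).find? (fun k => isVarLabel (E (p.take k))) with
  | some k =>
    match E (p.take k) with
    | some (Sum.inr i) => σ i (p.drop k)
    | _ => none
  | none => E p

/-- the term `A(x_1,…,x_k)σ`, whose root is `A` and whose `j`-th child is `σ(x_{j+1})` -/
def headTerm (A : Nt) (k : ℕ) (σ : ℕ → PreTerm Nt) : PreTerm Nt := fun p =>
  match p with
  | [] => some (Sum.inl A)
  | j :: p' => if j < k then σ j p' else none

/-- a rule `A(x_1,…,x_{ar(A)}) →_a E` of a first-order grammar -/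
structure GRule (Nt Act : Type) where
  lhsA : Nt
  act : Act
  rhs : PreTerm Nt

/-- a first-order grammar `G = (N, Σ, R)` -/
structure Grammar where
  Nt : Type
  Act : Type
  ar : Nt → ℕ
  rules : Set (GRule Nt Act)

/-- Well-formedness of a first-order grammar: the ranked alphabet `N` and the action
alphabet `Σ` are finite, there are finitely many rules, and each right-hand side is a
finite term all of whose variables are among `x_1, …, x_{ar(A)}` for the
left-hand-side nonterminal `A`. -/
def Grammar.WF (G : Grammar) : Prop :=
  Finite G.Nt ∧ Finite G.Act ∧ G.rules.Finite ∧
    ∀ r ∈ G.rules, IsFinTerm G.ar r.rhs ∧ varsOf r.rhs ⊆ {i | i < G.ar r.lhsA}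

/-- The transition relation of the labelled transition system `L_G`: each rule
`A(x_1,…,x_{ar(A)}) →_a E` induces `A(x_1,…,x_{ar(A)})σ →_a Eσ` for every
substitution `σ`. -/
def gstepP (G : Grammar) (a : G.Act) (E F : PreTerm G.Nt) : Prop :=
  ∃ r ∈ G.rules, r.act = a ∧
    ∃ σ : ℕ → PreTerm G.Nt, E = headTerm r.lhsA (G.ar r.lhsA) σ ∧ F = substPre r.rhs σ

/-- The transition relation of `L_G` augmented with a self-loop `x →_{a_x} x` with
a fresh action `a_x` for every variable `x` (so that `el(x,E) = 0` for `E ≠ x`). -/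
def gstepA (G : Grammar) : G.Act ⊕ ℕ → PreTerm G.Nt → PreTerm G.Nt → Prop
  | Sum.inl a => gstepP G a
  | Sum.inr i => fun E F => E = varPre i ∧ F = varPre i

section LTS

variable {Act S : Type*}

/-- `R` is a (strong) bisimulation for the transition relation `tr` -/
def IsBisim (tr : Act → S → S → Prop) (R : S → S → Prop) : Prop :=
  ∀ s t, R s t →
    (∀ a s', tr a s s' → ∃ t', tr a t t' ∧ R s' t') ∧
    (∀ a t', tr a t t' → ∃ s', tr a s s' ∧ R s' t')

/-- bisimilarity: the largest bisimulation -/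
def Bisim (tr : Act → S → S → Prop) (s t : S) : Prop := ∃ R, IsBisim tr R ∧ R s t

/-- the approximants `∼_k` of bisimilarity -/
def approx (tr : Act → S → S → Prop) : ℕ → S → S → Prop
  | 0 => fun _ _ => True
  | k + 1 => fun s t => approx tr k s t ∧
      (∀ a s', tr a s s' → ∃ t', tr a t t' ∧ approx tr k s' t') ∧
      (∀ a t', tr a t t' → ∃ s', tr a s s' ∧ approx tr k s' t')

/-- the equivalence level `el(s,t) = sup {k ∈ ℕ | s ∼_k t} ∈ ℕ ∪ {ω}` -/
def elev (tr : Act → S → S → Prop) (s t : S) : ℕ∞ :=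
  sSup {e : ℕ∞ | ∃ k : ℕ, approx tr k s t ∧ e = (k : ℕ∞)}

end LTS

/-- the size `|G|` of a grammar -/
def gsize (G : Grammar) : ℕ := ∑ᶠ r ∈ G.rules, (G.ar r.lhsA + 1 + size1 r.rhs)

/-- `m`: the maximal arity of a nonterminal -/
def maxAr (G : Grammar) : ℕ := sSup (Set.range G.ar)

/-- `hinc`: the maximal height increase in one transition step -/
def hinc (G : Grammar) : ℕ := sSup {k | ∃ r ∈ G.rules, k = heightP r.rhs - 1}

/-- `sinc`: the maximal size increase in one transition step -/
def sinc (G : Grammar) : ℕ := sSup {k | ∃ r ∈ G.rules, k = ntcount r.rhs}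

end FOG

namespace FOG

/-- the extension `→_w` of the transition relations to words `w ∈ Σ*` -/
def gsteps (G : Grammar) : List G.Act → PreTerm G.Nt → PreTerm G.Nt → Prop
  | [], E, F => E = F
  | a :: w, E, F => ∃ E', gstepP G a E E' ∧ gsteps G w E' F

/-- the term `A(x_1,…,x_{ar(A)})` -/
def stdTerm (G : Grammar) (A : G.Nt) : PreTerm G.Nt := headTerm A (G.ar A) varPre

/-- the length of a shortest `(A,i)`-sink word (`0`, i.e. `|ε|`, if none exists) -/
def sinkMin (G : Grammar) (A : G.Nt) (i : ℕ) : ℕ :=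
  sInf {L | ∃ w : List G.Act, w.length = L ∧ gsteps G w (stdTerm G A) (varPre i)}

/-- `d₀ = 1 + max_{A ∈ N, 1 ≤ i ≤ ar(A)} |w_{[A,i]}|`:
one plus the maximal length of the shortest sink words -/
def d0 (G : Grammar) : ℕ :=
  1 + sSup {L | ∃ A : G.Nt, ∃ i < G.ar A, L = sinkMin G A i}

end FOG


namespace FOG

variable {Nt : Type}

lemma findRange_eq_none {p : ℕ → Bool} {n : ℕ} :
    (List.range n).find? p = none ↔ ∀ k < n, p k = false := by
  rw [List.find?_eq_none]
  simp [List.mem_range, Bool.not_eq_true]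

lemma findRange_eq_some {p : ℕ → Bool} {n k : ℕ} :
    (List.range n).find? p = some k ↔ k < n ∧ p k = true ∧ ∀ t < k, p t = false := by
  induction n generalizing k with
  | zero => simp
  | succ n ih =>
    rw [List.range_succ, List.find?_append]
    rcases h : (List.range n).find? p with _ | k'
    · have hall : ∀ t < n, p t = false := findRange_eq_none.mp h
      simp only [Option.none_or]
      constructor
      · intro hs
        simp only [List.find?] at hs
        rcases hpn : p n with _ | _
        · simp [hpn] at hs
        · simp [hpn] at hs
          subst hs
          exact ⟨Nat.lt_succ_self n, hpn, hall⟩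
      · rintro ⟨hk, hpk, hmin⟩
        have hkn : k = n := by
          rcases Nat.lt_succ_iff_lt_or_eq.mp hk with h' | h'
          · exact absurd hpk (by simp [hall k h'])
          · exact h'
        subst hkn
        simp [List.find?, hpk]
    · have := ih.mp h
      rw [show (some k').or (List.find? p [n]) = some k' from rfl]
      constructor
      · intro hs
        obtain rfl : k' = k := Option.some.inj hs
        exact ⟨Nat.lt_succ_of_lt this.1, this.2.1, this.2.2⟩
      · rintro ⟨hk, hpk, hmin⟩
        rcases Nat.lt_trichotomy k k' with h' | h' | h'
        · exact absurd hpk (by simp [this.2.2 k h'])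
        · exact congrArg some h'.symm
        · exact absurd this.2.1 (by simp [hmin k' h'])

lemma substPre_eq_of_novar {E : PreTerm Nt} {σ : ℕ → PreTerm Nt} {p : List ℕ}
    (h : ∀ k ≤ p.length, isVarLabel (E (p.take k)) = false) :
    substPre E σ p = E p := by
  unfold substPre
  rw [findRange_eq_none.mpr (fun k hk => h k (Nat.lt_succ_iff.mp hk))]

lemma substPre_eq_of_var {E : PreTerm Nt} {σ : ℕ → PreTerm Nt} {p : List ℕ} {k x : ℕ}
    (hk : k ≤ p.length) (hx : E (p.take k) = some (Sum.inr x))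
    (hmin : ∀ t < k, isVarLabel (E (p.take t)) = false) :
    substPre E σ p = σ x (p.drop k) := by
  unfold substPre
  rw [findRange_eq_some.mpr ⟨Nat.lt_succ_of_le hk, by simp [hx, isVarLabel], hmin⟩]
  show (match E (List.take k p) with
    | some (Sum.inr i) => σ i (List.drop k p)
    | _ => none) = σ x (List.drop k p)
  rw [hx]


variable {ar : Nt → ℕ}

lemma isVarLabel_iff {o : Option (Sym Nt)} : isVarLabel o = true ↔ ∃ x, o = some (Sum.inr x) := by
  rcases o with _ | (A | x) <;> simp [isVarLabel]

lemma isVarLabel_false_iff {o : Option (Sym Nt)} :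
    isVarLabel o = false ↔ ∀ x, o ≠ some (Sum.inr x) := by
  rcases o with _ | (A | x) <;> simp [isVarLabel]

lemma prefix_ne_none {E : PreTerm Nt} (hE : IsTerm ar E) {p q : List ℕ}
    (h : E (p ++ q) ≠ none) : E p ≠ none := by
  induction q using List.reverseRecOn with
  | nil => simpa using h
  | append_singleton q₀ i ih =>
    rw [← List.append_assoc] at h
    obtain ⟨A, hA, -⟩ := (hE.2 (p ++ q₀) i).mp h
    exact ih (by rw [hA]; simp)

lemma var_no_below {E : PreTerm Nt} (hE : IsTerm ar E) {p : List ℕ} {x : ℕ}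
    (h : E p = some (Sum.inr x)) {q : List ℕ} (hq : q ≠ []) : E (p ++ q) = none := by
  by_contra h'
  rcases q with _ | ⟨j, q'⟩
  · exact hq rfl
  · have h2 : E ((p ++ [j]) ++ q') ≠ none := by
      simpa [List.append_assoc] using h'
    obtain ⟨A, hA, -⟩ := (hE.2 p j).mp (prefix_ne_none hE h2)
    rw [h] at hA
    cases hA

lemma var_root_eq {E : PreTerm Nt} (hE : IsTerm ar E) {x : ℕ}
    (h : E [] = some (Sum.inr x)) : E = varPre x := by
  funext p
  rcases p with _ | ⟨j, p'⟩
  · simpa [varPre] using h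
  · rw [show (j :: p') = [] ++ (j :: p') from rfl, var_no_below hE h (by simp)]
    simp [varPre]

lemma isTerm_subAt {E : PreTerm Nt} (hE : IsTerm ar E) {p : List ℕ}
    (hp : E p ≠ none) : IsTerm ar (subAt E p) := by
  refine ⟨by simpa [subAt] using hp, fun q i => ?_⟩
  simpa [subAt, List.append_assoc] using hE.2 (p ++ q) i

lemma high_child_none {E : PreTerm Nt} (hE : IsTerm ar E) {B : Nt} {j : ℕ}
    (hB : E [] = some (Sum.inl B)) (hj : ar B ≤ j) (p : List ℕ) : E (j :: p) = none := by
  by_contra h'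
  have h2 : E ([] ++ [j] ++ p) ≠ none := by simpa using h'
  obtain ⟨A, hA, hlt⟩ := (hE.2 [] j).mp (prefix_ne_none hE (by simpa using h2))
  rw [hB] at hA
  cases hA
  omega

lemma eta_headTerm {E : PreTerm Nt} (hE : IsTerm ar E) {B : Nt}
    (hB : E [] = some (Sum.inl B)) : E = headTerm B (ar B) (fun j => subAt E [j]) := by
  funext p
  rcases p with _ | ⟨j, p'⟩
  · simpa [headTerm] using hB
  · show E (j :: p') = if j < ar B then subAt E [j] p' else none
    split
    · rfl
    · exact high_child_none hE hB (by omega) p'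

lemma substPre_root_nonvar {E : PreTerm Nt} {σ : ℕ → PreTerm Nt}
    (h : isVarLabel (E []) = false) : substPre E σ [] = E [] :=
  substPre_eq_of_novar (by
    intro k hk
    have hk0 : k = 0 := by simpa using hk
    subst hk0
    simpa using h)

lemma substPre_varPre {σ : ℕ → PreTerm Nt} {x : ℕ} : substPre (varPre x) σ = σ x := by
  funext p
  rw [substPre_eq_of_var (k := 0) (x := x) (Nat.zero_le _) (by simp [varPre]) (by omega)]
  rfl

lemma firstVar_rec (E : PreTerm Nt) (p : List ℕ) :
    (∀ k ≤ p.length, isVarLabel (E (p.take k)) = false) ∨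
      (∃ k x, k ≤ p.length ∧ E (p.take k) = some (Sum.inr x) ∧
        ∀ t < k, isVarLabel (E (p.take t)) = false) := by
  rcases h : (List.range (p.length + 1)).find? (fun k => isVarLabel (E (p.take k))) with _ | k
  · left
    intro k hk
    exact findRange_eq_none.mp h k (Nat.lt_succ_of_le hk)
  · right
    obtain ⟨hk, hv, hmin⟩ := findRange_eq_some.mp h
    obtain ⟨x, hx⟩ := isVarLabel_iff.mp hv
    exact ⟨k, x, Nat.lt_succ_iff.mp hk, hx, hmin⟩

lemma substPre_cons {E : PreTerm Nt} {σ : ℕ → PreTerm Nt} {j : ℕ} {p : List ℕ}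
    (h : isVarLabel (E []) = false) :
    substPre E σ (j :: p) = substPre (subAt E [j]) σ p := by
  have hsub : ∀ q, subAt E [j] q = E (j :: q) := fun q => rfl
  rcases firstVar_rec (subAt E [j]) p with hn | ⟨k, x, hk, hx, hmin⟩
  · rw [substPre_eq_of_novar hn]
    rw [substPre_eq_of_novar (p := j :: p)]
    · exact (hsub p).symm
    · intro k hk
      rcases k with _ | t
      · simpa using h
      · rw [List.take_succ_cons, ← hsub]
        exact hn t (by simpa using hk)
  · rw [substPre_eq_of_var hk hx hmin]
    rw [substPre_eq_of_var (p := j :: p) (k := k + 1) (x := x)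
      (by simpa using hk) (by rw [List.take_succ_cons, ← hsub]; exact hx) ?_]
    · rw [List.drop_succ_cons]
    · intro t ht
      rcases t with _ | s
      · simpa using h
      · rw [List.take_succ_cons, ← hsub]
        exact hmin s (by omega)

lemma headTerm_subst {B : Nt} {k : ℕ} {σ ρ : ℕ → PreTerm Nt} :
    substPre (headTerm B k σ) ρ = headTerm B k (fun j => substPre (σ j) ρ) := by
  funext p
  rcases p with _ | ⟨j, p'⟩
  · rw [substPre_root_nonvar (by simp [headTerm, isVarLabel])]
    rfl
  · rw [substPre_cons (by simp [headTerm, isVarLabel])]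
    show _ = if j < k then substPre (σ j) ρ p' else none
    by_cases hj : j < k
    · rw [if_pos hj]
      congr 1
      funext q
      show (if j < k then σ j q else none) = σ j q
      rw [if_pos hj]
    · rw [if_neg hj]
      rw [substPre_eq_of_novar]
      · show (if j < k then σ j p' else none) = none
        rw [if_neg hj]
      · intro t ht
        show isVarLabel (if j < k then σ j _ else none) = false
        rw [if_neg hj]
        rfl

lemma substPre_comp {E : PreTerm Nt} {σ ρ : ℕ → PreTerm Nt} :
    substPre (substPre E σ) ρ = substPre E (fun x => substPre (σ x) ρ) := by
  funext p
  rcases firstVar_rec E p with hn | ⟨k, x, hk, hx, hmin⟩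
  · have hF : ∀ t ≤ p.length, substPre E σ (p.take t) = E (p.take t) := by
      intro t ht
      apply substPre_eq_of_novar
      intro s hs
      rw [List.take_take]
      exact hn (min s t) (by omega)
    rw [substPre_eq_of_novar (E := substPre E σ)
        (fun t ht => by rw [hF t ht]; exact hn t ht),
      substPre_eq_of_novar (σ := σ) hn,
      substPre_eq_of_novar (σ := fun x => substPre (σ x) ρ) hn]
  · have hFlt : ∀ t < k, substPre E σ (p.take t) = E (p.take t) := by
      intro t ht
      apply substPre_eq_of_novar
      intro s hs
      rw [List.take_take]
      exact hmin (min s t) (by omega)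
    have hFge : ∀ t, k ≤ t → t ≤ p.length →
        substPre E σ (p.take t) = σ x ((p.drop k).take (t - k)) := by
      intro t hkt ht
      rw [substPre_eq_of_var (k := k) (x := x)
        (by rw [List.length_take]; omega)
        (by rw [List.take_take, min_eq_left hkt]; exact hx)
        (fun s hs => by rw [List.take_take, min_eq_left (by omega : s ≤ t)]; exact hmin s hs)]
      rw [List.drop_take]
    rw [substPre_eq_of_var hk hx hmin]
    rcases firstVar_rec (σ x) (p.drop k) with hn2 | ⟨s, y, hs, hy, hmin2⟩
    · rw [substPre_eq_of_novar hn2]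
      rw [substPre_eq_of_novar (E := substPre E σ)]
      · rw [substPre_eq_of_var hk hx hmin]
      · intro t ht
        rcases Nat.lt_or_ge t k with h' | h'
        · rw [hFlt t h']
          exact hmin t h'
        · rw [hFge t h' ht]
          exact hn2 (t - k) (by rw [List.length_drop]; omega)
    · rw [substPre_eq_of_var hs hy hmin2]
      rw [List.length_drop] at hs
      rw [substPre_eq_of_var (E := substPre E σ) (k := k + s) (x := y)
        (by omega)
        (by rw [hFge (k + s) (by omega) (by omega)]; simpa using hy)
        ?_]
      · rw [← List.drop_drop]
      · intro t ht
        rcases Nat.lt_or_ge t k with h' | h'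
        · rw [hFlt t h']
          exact hmin t h'
        · rw [hFge t h' (by omega)]
          exact hmin2 (t - k) (by omega)

lemma substPre_congr {E : PreTerm Nt} {σ σ' : ℕ → PreTerm Nt}
    (h : ∀ x ∈ varsOf E, σ x = σ' x) : substPre E σ = substPre E σ' := by
  funext p
  rcases firstVar_rec E p with hn | ⟨k, x, hk, hx, hmin⟩
  · rw [substPre_eq_of_novar hn, substPre_eq_of_novar hn]
  · rw [substPre_eq_of_var hk hx hmin, substPre_eq_of_var hk hx hmin,
      h x ⟨p.take k, hx⟩]

lemma varsOf_subst {E : PreTerm Nt} {σ : ℕ → PreTerm Nt} {y : ℕ}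
    (h : y ∈ varsOf (substPre E σ)) : ∃ x ∈ varsOf E, y ∈ varsOf (σ x) := by
  obtain ⟨p, hp⟩ := h
  rcases firstVar_rec E p with hn | ⟨k, x, hk, hx, hmin⟩
  · rw [substPre_eq_of_novar hn] at hp
    have := hn p.length (le_refl _)
    rw [List.take_length, hp] at this
    simp [isVarLabel] at this
  · rw [substPre_eq_of_var hk hx hmin] at hp
    exact ⟨x, ⟨p.take k, hx⟩, ⟨p.drop k, hp⟩⟩

lemma substPre_isTerm {E : PreTerm Nt} {σ : ℕ → PreTerm Nt} (hE : IsTerm ar E)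
    (hσ : ∀ x ∈ varsOf E, IsTerm ar (σ x)) : IsTerm ar (substPre E σ) := by
  rcases hv : isVarLabel (E []) with _ | _
  · constructor
    · rw [substPre_root_nonvar hv]
      exact hE.1
    · intro p i
      rcases firstVar_rec E p with hn | ⟨k, x, hk, hx, hmin⟩
      · have hp : substPre E σ p = E p := substPre_eq_of_novar hn
        have htk : ∀ t ≤ p.length, (p ++ [i]).take t = p.take t := fun t ht =>
          List.take_append_of_le_length ht
        rcases hv2 : isVarLabel (E (p ++ [i])) with _ | _
        · have hpi : substPre E σ (p ++ [i]) = E (p ++ [i]) := by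
            apply substPre_eq_of_novar
            intro t ht
            rw [List.length_append, List.length_singleton] at ht
            rcases Nat.lt_or_ge t (p.length + 1) with h' | h'
            · rw [htk t (by omega)]
              exact hn t (by omega)
            · have ht1 : t = p.length + 1 := by omega
              subst ht1
              have hfull : (p ++ [i]).take (p.length + 1) = p ++ [i] := by
                have hlen : (p ++ [i]).length = p.length + 1 := by simp
                rw [← hlen, List.take_length]
              rw [hfull]
              exact hv2
          rw [hp, hpi]
          exact hE.2 p i
        · obtain ⟨y, hy⟩ := isVarLabel_iff.mp hv2
          have hfull : (p ++ [i]).take (p.length + 1) = p ++ [i] := by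
            have : (p ++ [i]).length = p.length + 1 := by simp
            rw [← this, List.take_length]
          have hpi : substPre E σ (p ++ [i]) = σ y [] := by
            rw [substPre_eq_of_var (k := p.length + 1) (x := y)
              (by simp) (by rw [hfull]; exact hy)
              (fun t ht => by rw [htk t (by omega)]; exact hn t (by omega))]
            congr 1
            have : (p ++ [i]).length = p.length + 1 := by simp
            rw [← this, List.drop_length]
          constructor
          · intro _
            exact (hE.2 p i).mp (by rw [hy]; simp) |>.imp fun A hA => by
              rw [hp]; exact hA
          · intro _
            rw [hpi]
            exact (hσ y ⟨p ++ [i], hy⟩).1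
      · have hp : substPre E σ p = σ x (p.drop k) := substPre_eq_of_var hk hx hmin
        have htk : ∀ t, t ≤ p.length → (p ++ [i]).take t = p.take t := fun t ht =>
          List.take_append_of_le_length ht
        have hpi : substPre E σ (p ++ [i]) = σ x (p.drop k ++ [i]) := by
          rw [substPre_eq_of_var (k := k) (x := x)
            (by simp; omega) (by rw [htk k hk]; exact hx)
            (fun t ht => by rw [htk t (by omega)]; exact hmin t ht)]
          rw [List.drop_append_of_le_length hk]
        rw [hp, hpi]
        exact (hσ x ⟨p.take k, hx⟩).2 (p.drop k) i
  · obtain ⟨x, hx⟩ := isVarLabel_iff.mp hv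
    rw [var_root_eq hE hx, substPre_varPre]
    exact hσ x ⟨[], hx⟩

lemma substPre_id {E : PreTerm Nt} (hE : IsTerm ar E) : substPre E varPre = E := by
  funext p
  rcases firstVar_rec E p with hn | ⟨k, x, hk, hx, hmin⟩
  · exact substPre_eq_of_novar hn
  · rw [substPre_eq_of_var hk hx hmin]
    show (if p.drop k = [] then some (Sum.inr x) else none) = E p
    split
    · rename_i hd
      have : k = p.length := by
        have := (List.length_drop : (p.drop k).length = p.length - k)
        rw [hd] at this
        simp at this
        omega
      subst this
      rw [List.take_length] at hx
      rw [hx]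
    · rename_i hd
      conv_rhs => rw [← List.take_append_drop k p]
      rw [var_no_below hE hx hd]


variable {G : Grammar}

lemma gsteps_append' {u v : List G.Act} {E F H : PreTerm G.Nt}
    (h1 : gsteps G u E F) (h2 : gsteps G v F H) : gsteps G (u ++ v) E H := by
  induction u generalizing E with
  | nil => rwa [show E = F from h1]
  | cons a u ih =>
    obtain ⟨E', hs, h1'⟩ := h1
    exact ⟨E', hs, ih h1'⟩

lemma varPre_no_step {a : G.Act} {x : ℕ} {F : PreTerm G.Nt}
    (h : gstepP G a (varPre x) F) : False := by
  obtain ⟨r, -, -, σ, hE, -⟩ := h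
  have := congrFun hE []
  simp [varPre, headTerm] at this

lemma gsteps_varPre {w : List G.Act} {x : ℕ} {F : PreTerm G.Nt}
    (h : gsteps G w (varPre x) F) : w = [] ∧ F = varPre x := by
  cases w with
  | nil => exact ⟨rfl, h.symm⟩
  | cons a w =>
    obtain ⟨E', hs, -⟩ := h
    exact absurd hs varPre_no_step

lemma gstepP_subst {a : G.Act} {E F : PreTerm G.Nt} {ρ : ℕ → PreTerm G.Nt}
    (h : gstepP G a E F) : gstepP G a (substPre E ρ) (substPre F ρ) := by
  obtain ⟨r, hr, ha, σ, hE, hF⟩ := h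
  exact ⟨r, hr, ha, fun j => substPre (σ j) ρ, by rw [hE, headTerm_subst],
    by rw [hF, substPre_comp]⟩

lemma gsteps_subst {w : List G.Act} {E F : PreTerm G.Nt} {ρ : ℕ → PreTerm G.Nt}
    (h : gsteps G w E F) : gsteps G w (substPre E ρ) (substPre F ρ) := by
  induction w generalizing E with
  | nil => rw [show E = F from h]; exact rfl
  | cons a w ih =>
    obtain ⟨E', hs, h'⟩ := h
    exact ⟨substPre E' ρ, gstepP_subst hs, ih h'⟩

lemma stdTerm_root {A : G.Nt} : stdTerm G A [] = some (Sum.inl A) := rfl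

lemma stdTerm_cons {A : G.Nt} (j : ℕ) (q : List ℕ) :
    stdTerm G A (j :: q) = if j < G.ar A then varPre j q else none := rfl

lemma stdTerm_isTerm {A : G.Nt} : IsTerm G.ar (stdTerm G A) := by
  constructor
  · simp [stdTerm, headTerm]
  · intro p i
    rcases p with _ | ⟨j, p'⟩
    · rw [List.nil_append, stdTerm_cons]
      constructor
      · intro h
        by_cases hi : i < G.ar A
        · exact ⟨A, rfl, hi⟩
        · rw [if_neg hi] at h
          exact absurd rfl h
      · rintro ⟨A', hA', hi⟩
        obtain rfl : A = A' := by
          have : some (Sum.inl A) = some (Sum.inl A') := hA'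
          simpa using this
        rw [if_pos hi]
        simp [varPre]
    · rw [List.cons_append, stdTerm_cons]
      constructor
      · intro h
        split at h
        · simp [varPre] at h
        · exact absurd rfl h
      · rintro ⟨A', hA', -⟩
        rw [stdTerm_cons] at hA'
        split at hA'
        · rcases p' with _ | _ <;> simp [varPre] at hA'
        · cases hA'

lemma varsOf_stdTerm {A : G.Nt} : varsOf (stdTerm G A) = {j | j < G.ar A} := by
  ext j
  constructor
  · rintro ⟨p, hp⟩
    rcases p with _ | ⟨j', p'⟩
    · cases hp
    · rw [stdTerm_cons] at hp
      split at hp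
      · rcases p' with _ | _
        · obtain rfl : j' = j := by simpa [varPre] using hp
          assumption
        · simp [varPre] at hp
      · cases hp
  · intro hj
    exact ⟨[j], by rw [stdTerm_cons, if_pos (show j < G.ar A from hj)]; rfl⟩

lemma stdTerm_ne_varPre {A : G.Nt} {i : ℕ} : stdTerm G A ≠ varPre i := by
  intro h
  have := congrFun h []
  simp [stdTerm, headTerm, varPre] at this

lemma eta_subst {E : PreTerm G.Nt} {B : G.Nt} (hE : IsTerm G.ar E)
    (hB : E [] = some (Sum.inl B)) :
    E = substPre (stdTerm G B) (fun j => subAt E [j]) := by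
  show E = substPre (headTerm B (G.ar B) varPre) _
  rw [headTerm_subst]
  have : (fun j => substPre (varPre j) (fun j => subAt E [j])) = fun j => subAt E [j] := by
    funext j
    rw [substPre_varPre]
  rw [this]
  exact eta_headTerm hE hB

lemma step_from_std (hG : G.WF) {a : G.Act} {A : G.Nt} {F : PreTerm G.Nt}
    (h : gstepP G a (stdTerm G A) F) :
    ∃ r ∈ G.rules, r.lhsA = A ∧ r.act = a ∧ F = r.rhs := by
  obtain ⟨r, hr, ha, σ, hE, hF⟩ := h
  have hA : r.lhsA = A := by
    have := congrFun hE []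
    simpa [stdTerm, headTerm] using this.symm
  subst hA
  refine ⟨r, hr, rfl, ha, ?_⟩
  have hσ : ∀ j ∈ varsOf r.rhs, varPre j = σ j := by
    intro j hj
    have hjlt : j < G.ar r.lhsA := (hG.2.2.2 r hr).2 hj
    funext p
    have h2 := congrFun hE (j :: p)
    rw [stdTerm_cons, if_pos hjlt] at h2
    rw [h2]
    show (if j < G.ar r.lhsA then σ j p else none) = σ j p
    rw [if_pos hjlt]
  rw [hF, ← substPre_congr hσ, substPre_id (hG.2.2.2 r hr).1.1]

lemma std_step (hG : G.WF) {r : GRule G.Nt G.Act} (hr : r ∈ G.rules) :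
    gstepP G r.act (stdTerm G r.lhsA) r.rhs :=
  ⟨r, hr, rfl, varPre, rfl, (substPre_id (hG.2.2.2 r hr).1.1).symm⟩

lemma sink_decomp (hG : G.WF) : ∀ n (w : List G.Act), w.length ≤ n →
    ∀ (E₀ : PreTerm G.Nt) (σ : ℕ → PreTerm G.Nt) (i : ℕ),
    IsTerm G.ar E₀ → (∀ x ∈ varsOf E₀, IsTerm G.ar (σ x)) →
    gsteps G w (substPre E₀ σ) (varPre i) →
    ∃ j ∈ varsOf E₀, ∃ u v, w = u ++ v ∧
      gsteps G u E₀ (varPre j) ∧ gsteps G v (σ j) (varPre i) := by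
  intro n
  induction n with
  | zero =>
    intro w hw E₀ σ i hE₀ hσ hst
    have hwnil : w = [] := List.length_eq_zero_iff.mp (Nat.le_zero.mp hw)
    subst hwnil
    rcases hv : E₀ [] with _ | (B | x)
    · exact absurd hv hE₀.1
    · have := congrFun (show substPre E₀ σ = varPre i from hst) []
      rw [substPre_root_nonvar (by rw [hv]; rfl), hv] at this
      simp [varPre] at this
    · refine ⟨x, ⟨[], hv⟩, [], [], rfl, show E₀ = varPre x from var_root_eq hE₀ hv, ?_⟩
      show σ x = varPre i
      rw [← substPre_varPre (σ := σ) (x := x), ← var_root_eq hE₀ hv]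
      exact hst
  | succ n ih =>
    intro w hw E₀ σ i hE₀ hσ hst
    rcases hv : E₀ [] with _ | (B | x)
    · exact absurd hv hE₀.1
    · rcases w with _ | ⟨a, w'⟩
      · have := congrFun (show substPre E₀ σ = varPre i from hst) []
        rw [substPre_root_nonvar (by rw [hv]; rfl), hv] at this
        simp [varPre] at this
      · obtain ⟨T', hstep, hrest⟩ := hst
        obtain ⟨r, hr, ha, τ, hT, hT'⟩ := hstep
        have hlhs : r.lhsA = B := by
          have := congrFun hT []
          rw [substPre_root_nonvar (by rw [hv]; rfl), hv] at this
          simpa [headTerm] using this.symm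
        subst hlhs
        set τ₀ : ℕ → PreTerm G.Nt := fun j => subAt E₀ [j] with hτ₀
        have hWFr := hG.2.2.2 r hr
        have hτeq : ∀ j ∈ varsOf r.rhs, τ j = substPre (τ₀ j) σ := by
          intro j hj
          have hjlt : j < G.ar r.lhsA := hWFr.2 hj
          funext p
          have := congrFun hT (j :: p)
          have h2 : headTerm r.lhsA (G.ar r.lhsA) τ (j :: p) = τ j p := by
            show (if j < G.ar r.lhsA then τ j p else none) = τ j p
            rw [if_pos hjlt]
          rw [h2] at this
          rw [← this, substPre_cons (by rw [hv]; rfl)]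
        have hE₀j : ∀ j, j < G.ar r.lhsA → E₀ [j] ≠ none := by
          intro j hj
          have := (hE₀.2 [] j).mpr ⟨r.lhsA, hv, hj⟩
          simpa using this
        have hT'eq : T' = substPre (substPre r.rhs τ₀) σ := by
          rw [hT', substPre_comp]
          exact substPre_congr hτeq
        set E₁ : PreTerm G.Nt := substPre r.rhs τ₀ with hE₁
        have hE₁term : IsTerm G.ar E₁ :=
          substPre_isTerm hWFr.1.1
            (fun x hx => isTerm_subAt hE₀ (hE₀j x (hWFr.2 hx)))
        have hvarsE₁ : ∀ x ∈ varsOf E₁, x ∈ varsOf E₀ := by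
          intro x hx
          obtain ⟨y, -, hxy⟩ := varsOf_subst hx
          obtain ⟨q, hq⟩ := hxy
          exact ⟨[y] ++ q, hq⟩
        have hrest' : gsteps G w' (substPre E₁ σ) (varPre i) := by
          rwa [← hT'eq]
        obtain ⟨j, hjE₁, u', v, huv, hu', hv'⟩ :=
          ih w' (by simpa using hw) E₁ σ i hE₁term (fun x hx => hσ x (hvarsE₁ x hx)) hrest'
        refine ⟨j, hvarsE₁ j hjE₁, a :: u', v, by rw [huv]; rfl, ?_, hv'⟩
        refine ⟨E₁, ⟨r, hr, ha, τ₀, ?_, rfl⟩, hu'⟩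
        exact eta_headTerm hE₀ hv
    · refine ⟨x, ⟨[], hv⟩, [], w, rfl, show E₀ = varPre x from var_root_eq hE₀ hv, ?_⟩
      show gsteps G w (σ x) (varPre i)
      rwa [← substPre_varPre (σ := σ) (x := x), ← var_root_eq hE₀ hv]


/-- height bound predicate -/
def HBd (E : PreTerm Nt) (h : ℕ) : Prop := ∀ p, E p ≠ none → p.length ≤ h

lemma desc (hG : G.WF) (c : ℕ) : ∀ (h : ℕ) (w : List G.Act) (E : PreTerm G.Nt) (i : ℕ),
    IsTerm G.ar E → HBd E h → gsteps G w E (varPre i) →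
    (∀ (B : G.Nt) (j : ℕ) (u : List G.Act), j < G.ar B → u ≠ [] → u.length ≤ w.length →
      gsteps G u (stdTerm G B) (varPre j) →
      ∃ u', u'.length ≤ c ∧ gsteps G u' (stdTerm G B) (varPre j)) →
    ∃ w', w'.length ≤ h * c ∧ gsteps G w' E (varPre i) := by
  intro h
  induction h with
  | zero =>
    intro w E i hE hHB hst hcomp
    rcases hv : E [] with _ | (B | x)
    · exact absurd hv hE.1
    · have hEeta := eta_subst hE hv
      obtain ⟨j, hjv, u, v, rfl, hu, hv'⟩ :=
        sink_decomp hG w.length w le_rfl (stdTerm G B) (fun j => subAt E [j]) i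
          stdTerm_isTerm
          (fun x hx => isTerm_subAt hE (by
            have hxlt : x < G.ar B := by rwa [varsOf_stdTerm] at hx
            simpa using (hE.2 [] x).mpr ⟨B, hv, hxlt⟩))
          (by rwa [← hEeta])
      have hjlt : j < G.ar B := by rwa [varsOf_stdTerm] at hjv
      have hEj : E [j] ≠ none := by simpa using (hE.2 [] j).mpr ⟨B, hv, hjlt⟩
      have := hHB [j] hEj
      simp at this
    · obtain ⟨hw0, hfe⟩ := gsteps_varPre (show gsteps G w (varPre x) (varPre i) from
        (var_root_eq hE hv) ▸ hst)
      exact ⟨[], by simp, show E = varPre i from (var_root_eq hE hv).trans hfe.symm⟩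
  | succ h ih =>
    intro w E i hE hHB hst hcomp
    rcases hv : E [] with _ | (B | x)
    · exact absurd hv hE.1
    · have hEeta := eta_subst hE hv
      obtain ⟨j, hjv, u, v, rfl, hu, hv'⟩ :=
        sink_decomp hG w.length w le_rfl (stdTerm G B) (fun j => subAt E [j]) i
          stdTerm_isTerm
          (fun x hx => isTerm_subAt hE (by
            have hxlt : x < G.ar B := by rwa [varsOf_stdTerm] at hx
            simpa using (hE.2 [] x).mpr ⟨B, hv, hxlt⟩))
          (by rwa [← hEeta])
      have hjlt : j < G.ar B := by rwa [varsOf_stdTerm] at hjv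
      have hEj : E [j] ≠ none := by simpa using (hE.2 [] j).mpr ⟨B, hv, hjlt⟩
      have hune : u ≠ [] := by
        rintro rfl
        exact stdTerm_ne_varPre (show stdTerm G B = varPre j from hu)
      obtain ⟨u', hu'len, hu'2⟩ := hcomp B j u hjlt hune (by simp) hu
      obtain ⟨v', hv'len, hv'2⟩ := ih v (subAt E [j]) i (isTerm_subAt hE hEj)
        (fun p hp => by
          have := hHB (j :: p) hp
          simpa using this)
        hv'
        (fun B' j' u₀ h1 h2 h3 h4 => hcomp B' j' u₀ h1 h2 (h3.trans (by simp)) h4)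
      refine ⟨u' ++ v', ?_, ?_⟩
      · rw [List.length_append, Nat.succ_mul]
        omega
      · have hlift := gsteps_subst (ρ := fun j' => subAt E [j']) hu'2
        rw [substPre_varPre, ← hEeta] at hlift
        exact gsteps_append' hlift hv'2
    · obtain ⟨hw0, hfe⟩ := gsteps_varPre (show gsteps G w (varPre x) (varPre i) from
        (var_root_eq hE hv) ▸ hst)
      exact ⟨[], by simp, show E = varPre i from (var_root_eq hE hv).trans hfe.symm⟩

lemma sinkMin_le {A : G.Nt} {i : ℕ} {w : List G.Act}
    (hw : gsteps G w (stdTerm G A) (varPre i)) : sinkMin G A i ≤ w.length :=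
  Nat.sInf_le ⟨w, rfl, hw⟩

lemma sinkMin_mem {A : G.Nt} {i : ℕ}
    (h : ∃ w : List G.Act, gsteps G w (stdTerm G A) (varPre i)) :
    ∃ w : List G.Act, w.length = sinkMin G A i ∧ gsteps G w (stdTerm G A) (varPre i) := by
  obtain ⟨w, hw⟩ := h
  exact Nat.sInf_mem (⟨w.length, w, rfl, hw⟩ :
    {L | ∃ w : List G.Act, w.length = L ∧ gsteps G w (stdTerm G A) (varPre i)}.Nonempty)

lemma sinkMin_pos {A : G.Nt} {i : ℕ}
    (h : ∃ w : List G.Act, gsteps G w (stdTerm G A) (varPre i)) : 1 ≤ sinkMin G A i := by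
  obtain ⟨w, hwl, hw⟩ := sinkMin_mem h
  rcases w with _ | ⟨a, w'⟩
  · exact absurd (show stdTerm G A = varPre i from hw) stdTerm_ne_varPre
  · simp at hwl
    omega

lemma rhs_HB (hG : G.WF) {r : GRule G.Nt G.Act} (hr : r ∈ G.rules) :
    HBd r.rhs (1 + hinc G) := by
  intro p hp
  have hfin := (hG.2.2.2 r hr).1.2
  have hS : {n | ∃ q ∈ positions r.rhs, q.length = n}.Finite := by
    have he : {n | ∃ q ∈ positions r.rhs, q.length = n} = List.length '' positions r.rhs := by
      ext n
      simp [Set.image]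
    rw [he]
    exact hfin.image _
  have h1 : p.length ≤ heightP r.rhs := le_csSup hS.bddAbove ⟨p, hp, rfl⟩
  have hH : {k | ∃ r' ∈ G.rules, k = heightP r'.rhs - 1}.Finite := by
    have he : {k | ∃ r' ∈ G.rules, k = heightP r'.rhs - 1}
        = (fun r' : GRule G.Nt G.Act => heightP r'.rhs - 1) '' G.rules := by
      ext k
      simp [Set.image, eq_comm]
    rw [he]
    exact hG.2.2.1.image _
  have h2 : heightP r.rhs - 1 ≤ hinc G := le_csSup hH.bddAbove ⟨r, hr, rfl⟩
  omega

end FOG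

open FOG in
/-- For every first-order grammar `G` with maximal arity `m` and
height-increase constant `hinc`, and all `A ∈ N` and `i < ar(A)`: if some
`(A,i)`-sink word exists (i.e. `A(x_1,…,x_{ar(A)}) →_w x_{i+1}` for some `w ∈ Σ*`),
then one of length at most `(2 + hinc)^{|N|·m}` exists; hence the maximal length
`d₀` of shortest sink words satisfies `d₀ ≤ 1 + (2 + hinc)^{|N|·m}`. -/
theorem short_sink_words (G : Grammar) (hG : G.WF) :
    (∀ A : G.Nt, ∀ i < G.ar A,
      (∃ w : List G.Act, gsteps G w (stdTerm G A) (varPre i)) →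
      ∃ w : List G.Act,
        w.length ≤ (2 + hinc G) ^ (Nat.card G.Nt * maxAr G) ∧
        gsteps G w (stdTerm G A) (varPre i)) ∧
    d0 G ≤ 1 + (2 + hinc G) ^ (Nat.card G.Nt * maxAr G) := by
  haveI : Finite G.Nt := hG.1
  set K := Nat.card G.Nt * maxAr G with hK
  have harle : ∀ A : G.Nt, G.ar A ≤ maxAr G := fun A =>
    le_csSup (Set.finite_range G.ar).bddAbove ⟨A, rfl⟩
  set SS : Set (G.Nt × ℕ) :=
    {p | p.2 < G.ar p.1 ∧ ∃ w : List G.Act, gsteps G w (stdTerm G p.1) (varPre p.2)}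
    with hSSdef
  have hSSfin : SS.Finite := by
    apply Set.Finite.subset (Set.Finite.prod Set.finite_univ (Set.finite_Iio (maxAr G)))
    rintro ⟨A, i⟩ ⟨h1, -⟩
    exact ⟨Set.mem_univ _, lt_of_lt_of_le h1 (harle A)⟩
  have hSScard : SS.ncard ≤ K := by
    have hinj : Function.Injective (fun s : SS =>
        (s.1.1, (⟨s.1.2, lt_of_lt_of_le s.2.1 (harle s.1.1)⟩ : Fin (maxAr G)))) := by
      rintro ⟨⟨A, i⟩, hs⟩ ⟨⟨B, j⟩, ht⟩ hst
      simp only [Prod.mk.injEq, Fin.mk.injEq] at hst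
      apply Subtype.ext
      exact Prod.ext hst.1 hst.2
    have hle := Nat.card_le_card_of_injective _ hinj
    rw [Nat.card_coe_set_eq] at hle
    simpa [Nat.card_prod, Nat.card_eq_fintype_card] using hle
  set c2 := 2 + hinc G with hc2
  have hc2pos : 1 ≤ c2 := by omega
  set rk : G.Nt × ℕ → ℕ :=
    fun s => ({t | t ∈ SS ∧ sinkMin G t.1 t.2 < sinkMin G s.1 s.2}).ncard + 1 with hrk
  have hrk_le : ∀ s ∈ SS, rk s ≤ SS.ncard := by
    intro s hs
    have hfin' : ({t | t ∈ SS ∧ sinkMin G t.1 t.2 < sinkMin G s.1 s.2}).Finite :=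
      hSSfin.subset (fun t ht => ht.1)
    have hnm : s ∉ {t | t ∈ SS ∧ sinkMin G t.1 t.2 < sinkMin G s.1 s.2} :=
      fun hmem => lt_irrefl _ hmem.2
    have h3 := Set.ncard_insert_of_notMem hnm hfin'
    have hsub : insert s {t | t ∈ SS ∧ sinkMin G t.1 t.2 < sinkMin G s.1 s.2} ⊆ SS := by
      intro t ht
      rcases Set.mem_insert_iff.mp ht with rfl | ⟨h1, -⟩
      · exact hs
      · exact h1
    have h4 := Set.ncard_le_ncard hsub hSSfin
    simp only [hrk]
    omega
  have claim : ∀ n : ℕ, ∀ s ∈ SS, sinkMin G s.1 s.2 ≤ n → sinkMin G s.1 s.2 ≤ c2 ^ rk s := by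
    intro n
    induction n with
    | zero =>
      intro s hs hle
      have := sinkMin_pos hs.2
      omega
    | succ n ih =>
      rintro ⟨A, i⟩ hs hle'
      have hle : sinkMin G A i ≤ n + 1 := hle'
      obtain ⟨w, hwlen, hw⟩ := sinkMin_mem hs.2
      rcases w with _ | ⟨a, w'⟩
      · exact absurd (show stdTerm G A = varPre i from hw) stdTerm_ne_varPre
      obtain ⟨T, hstep, hrest⟩ := hw
      obtain ⟨r, hr, hrA0, -, rfl⟩ := step_from_std hG hstep
      have hrA : r.lhsA = A := hrA0
      have hμpos : 1 ≤ sinkMin G A i := sinkMin_pos hs.2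
      have hw'len : w'.length + 1 = sinkMin G A i := by simpa using hwlen
      have hcomp : ∀ (B : G.Nt) (j : ℕ) (u : List G.Act), j < G.ar B → u ≠ [] →
          u.length ≤ w'.length → gsteps G u (stdTerm G B) (varPre j) →
          ∃ u', u'.length ≤ c2 ^ (rk (A, i) - 1) ∧ gsteps G u' (stdTerm G B) (varPre j) := by
        intro B j u hjlt hune hulen hu
        have hBj : (B, j) ∈ SS := ⟨hjlt, u, hu⟩
        have hμB : sinkMin G B j < sinkMin G A i := by
          have h1 : sinkMin G B j ≤ u.length := sinkMin_le hu
          omega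
        have hrkB : rk (B, j) ≤ rk (A, i) - 1 := by
          have hfinB : ({t | t ∈ SS ∧ sinkMin G t.1 t.2 < sinkMin G B j}).Finite :=
            hSSfin.subset (fun t ht => ht.1)
          have hnm : (B, j) ∉ {t | t ∈ SS ∧ sinkMin G t.1 t.2 < sinkMin G B j} :=
            fun hmem => lt_irrefl _ hmem.2
          have h3 := Set.ncard_insert_of_notMem hnm hfinB
          have hsub : insert (B, j) {t | t ∈ SS ∧ sinkMin G t.1 t.2 < sinkMin G B j}
              ⊆ {t | t ∈ SS ∧ sinkMin G t.1 t.2 < sinkMin G A i} := by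
            intro t ht
            rcases Set.mem_insert_iff.mp ht with rfl | ⟨h1, h2⟩
            · exact ⟨hBj, hμB⟩
            · exact ⟨h1, h2.trans hμB⟩
          have h4 := Set.ncard_le_ncard hsub (hSSfin.subset (fun t ht => ht.1))
          simp only [hrk]
          omega
        have hB := ih (B, j) hBj (show sinkMin G B j ≤ n by omega)
        obtain ⟨u', hu'l, hu'2⟩ := sinkMin_mem hBj.2
        refine ⟨u', ?_, hu'2⟩
        rw [hu'l]
        calc sinkMin G B j ≤ c2 ^ rk (B, j) := hB
          _ ≤ c2 ^ (rk (A, i) - 1) := Nat.pow_le_pow_right hc2pos hrkB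
      obtain ⟨w'', hw''len, hw''2⟩ := desc hG (c2 ^ (rk (A, i) - 1)) (1 + hinc G) w' r.rhs i
        (hG.2.2.2 r hr).1.1 (rhs_HB hG hr) hrest hcomp
      have hfull : gsteps G (r.act :: w'') (stdTerm G A) (varPre i) :=
        ⟨r.rhs, hrA ▸ std_step hG hr, hw''2⟩
      have h6 := sinkMin_le hfull
      rw [List.length_cons] at h6
      have hX : 1 ≤ c2 ^ (rk (A, i) - 1) := Nat.one_le_pow _ _ (by omega)
      have hrkpos : 1 ≤ rk (A, i) := by simp only [hrk]; omega
      have hco : c2 * c2 ^ (rk (A, i) - 1) =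
          (1 + hinc G) * c2 ^ (rk (A, i) - 1) + c2 ^ (rk (A, i) - 1) := by
        rw [hc2]
        ring
      have h7 : sinkMin G A i ≤ c2 * c2 ^ (rk (A, i) - 1) := by omega
      calc sinkMin G A i ≤ c2 * c2 ^ (rk (A, i) - 1) := h7
        _ = c2 ^ (rk (A, i) - 1 + 1) := (pow_succ' c2 _).symm
        _ = c2 ^ rk (A, i) := by
            have h8 : rk (A, i) - 1 + 1 = rk (A, i) := by omega
            rw [h8]
  have main : ∀ A : G.Nt, ∀ i, (A, i) ∈ SS → sinkMin G A i ≤ c2 ^ K := by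
    intro A i hs
    calc sinkMin G A i ≤ c2 ^ rk (A, i) := claim _ (A, i) hs le_rfl
      _ ≤ c2 ^ SS.ncard := Nat.pow_le_pow_right hc2pos (hrk_le _ hs)
      _ ≤ c2 ^ K := Nat.pow_le_pow_right hc2pos hSScard
  constructor
  · intro A i hi hex
    obtain ⟨w, hwl, hw⟩ := sinkMin_mem hex
    exact ⟨w, by rw [hwl]; exact main A i ⟨hi, hex⟩, hw⟩
  · have hsup : sSup {L | ∃ A : G.Nt, ∃ i < G.ar A, L = sinkMin G A i} ≤ c2 ^ K := by
      rcases Set.eq_empty_or_nonempty {L | ∃ A : G.Nt, ∃ i < G.ar A, L = sinkMin G A i}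
        with he | hne
      · rw [he, csSup_empty]
        exact Nat.zero_le _
      · apply csSup_le hne
        rintro L ⟨A, i, hi, rfl⟩
        by_cases hex : ∃ w : List G.Act, gsteps G w (stdTerm G A) (varPre i)
        · exact main A i ⟨hi, hex⟩
        · have hempty : {L | ∃ w : List G.Act, w.length = L ∧
              gsteps G w (stdTerm G A) (varPre i)} = ∅ := by
            ext M
            simp only [Set.mem_setOf_eq, Set.mem_empty_iff_false, iff_false]
            rintro ⟨w, -, hw⟩
            exact hex ⟨w, hw⟩
          rw [sinkMin, hempty, Nat.sInf_empty]
          exact Nat.zero_le _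
    unfold d0
    omega
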